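/- For probability measures P and Q (not mutually singular) and α ∈ (0,1): the infimum over probability measures R of α·KL(R‖P) + (1−α)·KL(R‖Q) equals (1−α)·R_α(Q‖P), attained at the normalized geometric mixture with density proportional to p^α q^{1−α}. -/

import Mathlib

open MeasureTheory Real

/-- Kullback-Leibler divergence between two distributions given by densities `p`, `q`
with respect to a common dominating measure `ν`. -/
noncomputable def KLd {X : Type*} [MeasurableSpace X] (ν : Measure X) (p q : X → ℝ) : ℝ :=
  ∫ x, p x * Real.log (p x / q x) ∂ν

lemma aux_log_bound {α u : ℝ} (hα0 : 0 < α) (hα1 : α < 1) (hu : 0 < u) :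
    u ^ (1 - α) * |Real.log u| ≤ u / α + 1 / (1 - α) := by
  have h1α : (0:ℝ) < 1 - α := by linarith
  have h4 : (0:ℝ) ≤ u ^ (1 - α) := (Real.rpow_pos_of_pos hu _).le
  rcases le_or_gt 1 u with h | h
  · rw [abs_of_nonneg (Real.log_nonneg h)]
    have h2 := Real.log_le_sub_one_of_pos (Real.rpow_pos_of_pos hu α)
    rw [Real.log_rpow hu] at h2
    have h3 : u ^ (1 - α) * u ^ α = u := by
      rw [← Real.rpow_add hu]; norm_num
    have h5 : u ^ (1 - α) * (α * Real.log u) ≤ u := by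
      calc u ^ (1 - α) * (α * Real.log u) ≤ u ^ (1 - α) * (u ^ α - 1) :=
            mul_le_mul_of_nonneg_left h2 h4
        _ ≤ u ^ (1 - α) * u ^ α := by nlinarith
        _ = u := h3
    have h6 : u ^ (1 - α) * Real.log u ≤ u / α := by
      rw [le_div_iff₀ hα0]
      calc u ^ (1 - α) * Real.log u * α = u ^ (1 - α) * (α * Real.log u) := by ring
        _ ≤ u := h5
    have : (0:ℝ) < 1 / (1 - α) := by positivity
    linarith
  · rw [abs_of_nonpos (Real.log_nonpos hu.le h.le)]
    have h2 := Real.log_le_sub_one_of_pos (Real.rpow_pos_of_pos (inv_pos.2 hu) (1 - α))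
    rw [Real.log_rpow (inv_pos.2 hu), Real.log_inv] at h2
    have h3 : u ^ (1 - α) * u⁻¹ ^ (1 - α) = 1 := by
      rw [← Real.mul_rpow hu.le (inv_nonneg.2 hu.le), mul_inv_cancel₀ (ne_of_gt hu), Real.one_rpow]
    have h5 : u ^ (1 - α) * ((1 - α) * -Real.log u) ≤ 1 := by
      calc u ^ (1 - α) * ((1 - α) * -Real.log u) ≤ u ^ (1 - α) * (u⁻¹ ^ (1 - α) - 1) :=
            mul_le_mul_of_nonneg_left h2 h4
        _ ≤ u ^ (1 - α) * u⁻¹ ^ (1 - α) := by nlinarith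
        _ = 1 := h3
    have h6 : u ^ (1 - α) * -Real.log u ≤ 1 / (1 - α) := by
      rw [le_div_iff₀ h1α]
      calc u ^ (1 - α) * -Real.log u * (1 - α) = u ^ (1 - α) * ((1 - α) * -Real.log u) := by ring
        _ ≤ 1 := h5
    have : (0:ℝ) ≤ u / α := by positivity
    linarith

lemma aux_bound {α pz qz : ℝ} (hα0 : 0 < α) (hα1 : α < 1) (hp : 0 ≤ pz) (hq : 0 ≤ qz) :
    |pz ^ α * qz ^ (1 - α) * Real.log (qz / pz)| ≤ qz / α + pz / (1 - α) := by
  have h1α : (0:ℝ) < 1 - α := by linarith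
  rcases eq_or_lt_of_le hp with h0 | hppos
  · rw [← h0, Real.zero_rpow (ne_of_gt hα0)]
    simp only [zero_mul, abs_zero]
    positivity
  rcases eq_or_lt_of_le hq with h0 | hqpos
  · rw [← h0, Real.zero_rpow (ne_of_gt h1α)]
    simp only [mul_zero, zero_mul, abs_zero]
    positivity
  · have hu : 0 < qz / pz := div_pos hqpos hppos
    have key := aux_log_bound hα0 hα1 hu
    have hg_eq : pz ^ α * qz ^ (1 - α) = pz * (qz / pz) ^ (1 - α) := by
      rw [Real.div_rpow hq hp]
      have hpow : pz ^ α * pz ^ (1 - α) = pz := by rw [← Real.rpow_add hppos]; norm_num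
      have hpne := ne_of_gt (Real.rpow_pos_of_pos hppos (1 - α))
      field_simp
      linear_combination hpow
    rw [hg_eq, mul_assoc, abs_mul, abs_of_nonneg hppos.le, abs_mul,
        abs_of_nonneg (Real.rpow_nonneg hu.le _)]
    calc pz * ((qz / pz) ^ (1 - α) * |Real.log (qz / pz)|)
        ≤ pz * ((qz / pz) / α + 1 / (1 - α)) := mul_le_mul_of_nonneg_left key hppos.le
      _ = qz / α + pz / (1 - α) := by field_simp

lemma aux_comb {α pz qz rz Z : ℝ} (hα0 : 0 < α) (hα1 : α < 1) (hZ : 0 < Z)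
    (hr : 0 ≤ rz) (hp : 0 ≤ pz) (hq : 0 ≤ qz)
    (hrp : pz = 0 → rz = 0) (hrq : qz = 0 → rz = 0) :
    α * (rz * Real.log (rz / pz)) + (1 - α) * (rz * Real.log (rz / qz))
      = rz * Real.log (rz / (pz ^ α * qz ^ (1 - α) / Z)) - rz * Real.log Z := by
  rcases eq_or_lt_of_le hr with h0 | hrpos
  · simp [← h0]
  · have hpne : pz ≠ 0 := fun h => absurd (hrp h) (ne_of_gt hrpos)
    have hqne : qz ≠ 0 := fun h => absurd (hrq h) (ne_of_gt hrpos)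
    have hppos := lt_of_le_of_ne hp (Ne.symm hpne)
    have hqpos := lt_of_le_of_ne hq (Ne.symm hqne)
    have hgpos : 0 < pz ^ α * qz ^ (1 - α) :=
      mul_pos (Real.rpow_pos_of_pos hppos _) (Real.rpow_pos_of_pos hqpos _)
    rw [Real.log_div (ne_of_gt hrpos) hpne, Real.log_div (ne_of_gt hrpos) hqne,
        Real.log_div (ne_of_gt hrpos) (ne_of_gt (div_pos hgpos hZ)),
        Real.log_div (ne_of_gt hgpos) (ne_of_gt hZ),
        Real.log_mul (ne_of_gt (Real.rpow_pos_of_pos hppos _))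
          (ne_of_gt (Real.rpow_pos_of_pos hqpos _)),
        Real.log_rpow hppos, Real.log_rpow hqpos]
    ring

lemma aux_ge {rz sz : ℝ} (hr : 0 ≤ rz) (hs : 0 ≤ sz) (h : sz = 0 → rz = 0) :
    rz - sz ≤ rz * Real.log (rz / sz) := by
  rcases eq_or_lt_of_le hr with h0 | hrpos
  · rw [← h0]; simp; linarith
  · have hsne : sz ≠ 0 := fun hh => absurd (h hh) (ne_of_gt hrpos)
    have hspos := lt_of_le_of_ne hs (Ne.symm hsne)
    have h2 := Real.log_le_sub_one_of_pos (div_pos hspos hrpos)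
    have h3 : Real.log (rz / sz) = -Real.log (sz / rz) := by
      rw [← Real.log_inv]; congr 1; rw [inv_div]
    rw [h3]
    have h4 : sz / rz * rz = sz := div_mul_cancel₀ _ (ne_of_gt hrpos)
    nlinarith [mul_le_mul_of_nonneg_right h2 hr]

lemma aux_eq1 {α pz qz Z : ℝ} (hα0 : 0 < α) (hα1 : α < 1) (hZ : 0 < Z)
    (hp : 0 ≤ pz) (hq : 0 ≤ qz) :
    pz ^ α * qz ^ (1 - α) / Z * Real.log (pz ^ α * qz ^ (1 - α) / Z / pz)
      = ((1 - α) * (pz ^ α * qz ^ (1 - α) * Real.log (qz / pz))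
          - pz ^ α * qz ^ (1 - α) * Real.log Z) / Z := by
  have h1α : (0:ℝ) < 1 - α := by linarith
  rcases eq_or_lt_of_le hp with h0 | hppos
  · rw [← h0, Real.zero_rpow (ne_of_gt hα0)]; simp
  rcases eq_or_lt_of_le hq with h0 | hqpos
  · rw [← h0, Real.zero_rpow (ne_of_gt h1α)]; simp
  · have hgpos : 0 < pz ^ α * qz ^ (1 - α) :=
      mul_pos (Real.rpow_pos_of_pos hppos _) (Real.rpow_pos_of_pos hqpos _)
    rw [Real.log_div (ne_of_gt (div_pos hgpos hZ)) (ne_of_gt hppos),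
        Real.log_div (ne_of_gt hgpos) (ne_of_gt hZ),
        Real.log_mul (ne_of_gt (Real.rpow_pos_of_pos hppos _))
          (ne_of_gt (Real.rpow_pos_of_pos hqpos _)),
        Real.log_rpow hppos, Real.log_rpow hqpos,
        Real.log_div (ne_of_gt hqpos) (ne_of_gt hppos)]
    ring

lemma aux_eq2 {α pz qz Z : ℝ} (hα0 : 0 < α) (hα1 : α < 1) (hZ : 0 < Z)
    (hp : 0 ≤ pz) (hq : 0 ≤ qz) :
    pz ^ α * qz ^ (1 - α) / Z * Real.log (pz ^ α * qz ^ (1 - α) / Z / qz)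
      = (-α * (pz ^ α * qz ^ (1 - α) * Real.log (qz / pz))
          - pz ^ α * qz ^ (1 - α) * Real.log Z) / Z := by
  have h1α : (0:ℝ) < 1 - α := by linarith
  rcases eq_or_lt_of_le hp with h0 | hppos
  · rw [← h0, Real.zero_rpow (ne_of_gt hα0)]; simp
  rcases eq_or_lt_of_le hq with h0 | hqpos
  · rw [← h0, Real.zero_rpow (ne_of_gt h1α)]; simp
  · have hgpos : 0 < pz ^ α * qz ^ (1 - α) :=
      mul_pos (Real.rpow_pos_of_pos hppos _) (Real.rpow_pos_of_pos hqpos _)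
    rw [Real.log_div (ne_of_gt (div_pos hgpos hZ)) (ne_of_gt hqpos),
        Real.log_div (ne_of_gt hgpos) (ne_of_gt hZ),
        Real.log_mul (ne_of_gt (Real.rpow_pos_of_pos hppos _))
          (ne_of_gt (Real.rpow_pos_of_pos hqpos _)),
        Real.log_rpow hppos, Real.log_rpow hqpos,
        Real.log_div (ne_of_gt hqpos) (ne_of_gt hppos)]
    ring

/-- For probability measures `P`, `Q` (densities `p`, `q` w.r.t. `ν`, not mutually singular,
i.e. `Z = ∫ p^α q^{1−α} dν > 0`) and `α ∈ (0,1)`: the infimum over probability measures `R`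
of `α·KL(R‖P) + (1−α)·KL(R‖Q)` equals `(1−α)·R_α(Q‖P)`, where
`R_α(Q‖P) = (1/(α−1)) log Z`, attained at the normalized geometric mixture with density
`p^α q^{1−α} / Z`. -/
theorem stmt3 {X : Type*} [MeasurableSpace X] (ν : Measure X)
    (p q : X → ℝ) (α : ℝ) (hα : α ∈ Set.Ioo (0:ℝ) 1)
    (hpm : Measurable p) (hqm : Measurable q)
    (hp0 : ∀ x, 0 ≤ p x) (hq0 : ∀ x, 0 ≤ q x)
    (hp1 : ∫ x, p x ∂ν = 1) (hq1 : ∫ x, q x ∂ν = 1)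
    (Z : ℝ) (hZ : Z = ∫ x, p x ^ α * q x ^ (1 - α) ∂ν) (hZpos : 0 < Z) :
    (∀ r : X → ℝ, Measurable r → (∀ x, 0 ≤ r x) → (∫ x, r x ∂ν) = 1 →
        (∀ x, p x = 0 → r x = 0) → (∀ x, q x = 0 → r x = 0) →
        Integrable (fun x => r x * Real.log (r x / p x)) ν →
        Integrable (fun x => r x * Real.log (r x / q x)) ν →
        (1 - α) * ((1 / (α - 1)) * Real.log Z)
          ≤ α * KLd ν r p + (1 - α) * KLd ν r q)
    ∧ α * KLd ν (fun x => p x ^ α * q x ^ (1 - α) / Z) p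
        + (1 - α) * KLd ν (fun x => p x ^ α * q x ^ (1 - α) / Z) q
      = (1 - α) * ((1 / (α - 1)) * Real.log Z) := by
  obtain ⟨hα0, hα1⟩ := hα
  have h1α : (0:ℝ) < 1 - α := by linarith
  have hZne : Z ≠ 0 := ne_of_gt hZpos
  have hrhs : (1 - α) * ((1 / (α - 1)) * Real.log Z) = -Real.log Z := by
    have hne : α - 1 ≠ 0 := by linarith
    field_simp
    ring
  have hpint : Integrable p ν := by
    by_contra h; rw [integral_undef h] at hp1; norm_num at hp1
  have hqint : Integrable q ν := by
    by_contra h; rw [integral_undef h] at hq1; norm_num at hq1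
  have hgint : Integrable (fun x => p x ^ α * q x ^ (1 - α)) ν := by
    by_contra h
    rw [integral_undef h] at hZ
    exact hZne hZ
  have hgZ1 : ∫ x, p x ^ α * q x ^ (1 - α) / Z ∂ν = 1 := by
    rw [integral_div, ← hZ, div_self hZne]
  constructor
  · intro r hrm hr0 hr1 hrp hrq hA hB
    have hrint : Integrable r ν := by
      by_contra h; rw [integral_undef h] at hr1; norm_num at hr1
    have hcomb : ∀ x, α * (r x * Real.log (r x / p x)) + (1 - α) * (r x * Real.log (r x / q x))
        = r x * Real.log (r x / (p x ^ α * q x ^ (1 - α) / Z)) - r x * Real.log Z :=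
      fun x => aux_comb hα0 hα1 hZpos (hr0 x) (hp0 x) (hq0 x) (hrp x) (hrq x)
    have hfint : Integrable (fun x => r x * Real.log (r x / (p x ^ α * q x ^ (1 - α) / Z))) ν := by
      have heq : (fun x => r x * Real.log (r x / (p x ^ α * q x ^ (1 - α) / Z)))
          = fun x => (α * (r x * Real.log (r x / p x))
              + (1 - α) * (r x * Real.log (r x / q x))) + r x * Real.log Z := by
        funext x
        have := hcomb x
        linarith
      rw [heq]
      exact ((hA.const_mul α).add (hB.const_mul (1 - α))).add (hrint.mul_const _)
    have hr0int : Integrable (fun x => p x ^ α * q x ^ (1 - α) / Z) ν := hgint.div_const Z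
    have hf0 : 0 ≤ ∫ x, r x * Real.log (r x / (p x ^ α * q x ^ (1 - α) / Z)) ∂ν := by
      have hle : ∀ x, r x - p x ^ α * q x ^ (1 - α) / Z
          ≤ r x * Real.log (r x / (p x ^ α * q x ^ (1 - α) / Z)) := by
        intro x
        refine aux_ge (hr0 x) (div_nonneg (mul_nonneg (Real.rpow_nonneg (hp0 x) _)
            (Real.rpow_nonneg (hq0 x) _)) hZpos.le) (fun h => ?_)
        have hg : p x ^ α * q x ^ (1 - α) = 0 := by
          rcases div_eq_zero_iff.1 h with h' | h'
          · exact h'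
          · exact absurd h' hZne
        rcases mul_eq_zero.1 hg with h' | h'
        · apply hrp
          by_contra hp'
          exact absurd h'
            (ne_of_gt (Real.rpow_pos_of_pos (lt_of_le_of_ne (hp0 x) (Ne.symm hp')) _))
        · apply hrq
          by_contra hq'
          exact absurd h'
            (ne_of_gt (Real.rpow_pos_of_pos (lt_of_le_of_ne (hq0 x) (Ne.symm hq')) _))
      calc (0:ℝ) = ∫ x, (r x - p x ^ α * q x ^ (1 - α) / Z) ∂ν := by
            rw [integral_sub hrint hr0int, hr1, hgZ1]; norm_num
        _ ≤ _ := integral_mono (hrint.sub hr0int) hfint hle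
    have h1 : ∫ x, (α * (r x * Real.log (r x / p x))
          + (1 - α) * (r x * Real.log (r x / q x))) ∂ν
        = α * KLd ν r p + (1 - α) * KLd ν r q := by
      rw [integral_add (hA.const_mul α) (hB.const_mul (1 - α)),
          integral_const_mul, integral_const_mul]
      rfl
    have h2 : ∫ x, (α * (r x * Real.log (r x / p x))
          + (1 - α) * (r x * Real.log (r x / q x))) ∂ν
        = (∫ x, r x * Real.log (r x / (p x ^ α * q x ^ (1 - α) / Z)) ∂ν) - Real.log Z := by
      have heq : (fun x => α * (r x * Real.log (r x / p x))
            + (1 - α) * (r x * Real.log (r x / q x)))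
          = fun x => r x * Real.log (r x / (p x ^ α * q x ^ (1 - α) / Z)) - r x * Real.log Z :=
        funext fun x => hcomb x
      rw [heq, integral_sub hfint (hrint.mul_const _), integral_mul_const, hr1, one_mul]
    rw [hrhs, ← h1, h2]
    linarith
  · have hsint : Integrable (fun x => p x ^ α * q x ^ (1 - α) * Real.log (q x / p x)) ν := by
      refine Integrable.mono' ((hqint.div_const α).add (hpint.div_const (1 - α)))
        (Measurable.aestronglyMeasurable
          (((by fun_prop : Measurable fun x => p x ^ α * q x ^ (1 - α))).mul
            ((hqm.div hpm).log))) ?_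
      filter_upwards with x
      simpa only [Real.norm_eq_abs, Pi.add_apply] using aux_bound hα0 hα1 (hp0 x) (hq0 x)
    have e1 : KLd ν (fun x => p x ^ α * q x ^ (1 - α) / Z) p
        = ((1 - α) * (∫ x, p x ^ α * q x ^ (1 - α) * Real.log (q x / p x) ∂ν)
            - Z * Real.log Z) / Z := by
      have heq : (fun x => p x ^ α * q x ^ (1 - α) / Z
            * Real.log (p x ^ α * q x ^ (1 - α) / Z / p x))
          = fun x => ((1 - α) * (p x ^ α * q x ^ (1 - α) * Real.log (q x / p x))
              - p x ^ α * q x ^ (1 - α) * Real.log Z) / Z :=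
        funext fun x => aux_eq1 hα0 hα1 hZpos (hp0 x) (hq0 x)
      show (∫ x, p x ^ α * q x ^ (1 - α) / Z
          * Real.log (p x ^ α * q x ^ (1 - α) / Z / p x) ∂ν) = _
      rw [heq, integral_div, integral_sub (hsint.const_mul _) (hgint.mul_const _),
          integral_const_mul, integral_mul_const, ← hZ]
    have e2 : KLd ν (fun x => p x ^ α * q x ^ (1 - α) / Z) q
        = (-α * (∫ x, p x ^ α * q x ^ (1 - α) * Real.log (q x / p x) ∂ν)
            - Z * Real.log Z) / Z := by
      have heq : (fun x => p x ^ α * q x ^ (1 - α) / Z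
            * Real.log (p x ^ α * q x ^ (1 - α) / Z / q x))
          = fun x => (-α * (p x ^ α * q x ^ (1 - α) * Real.log (q x / p x))
              - p x ^ α * q x ^ (1 - α) * Real.log Z) / Z :=
        funext fun x => aux_eq2 hα0 hα1 hZpos (hp0 x) (hq0 x)
      show (∫ x, p x ^ α * q x ^ (1 - α) / Z
          * Real.log (p x ^ α * q x ^ (1 - α) / Z / q x) ∂ν) = _
      rw [heq, integral_div, integral_sub (hsint.const_mul _) (hgint.mul_const _),
          integral_const_mul, integral_mul_const, ← hZ]
    rw [e1, e2, hrhs]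
    field_simp
    ring
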